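/- arXiv:1402.5639 — 2 statements merged into one kernel-verified Lean document; each statement's English description precedes it below -/
import Mathlib

section
/- Let φ : ℝ² → ℝ be differentiable, k > 0, and let p : ℝ → ℝ² and θ, θ_d : ℝ → ℝ be functions such that for every t: ∇φ(p(t)) = -‖∇φ(p(t))‖·(cos θ_d(t), sin θ_d(t)) and p'(t) = k·‖∇φ(p(t))‖·cos(θ(t) - θ_d(t))·(cos θ(t), sin θ(t)). Then t ↦ φ(p(t)) is differentiable with derivative d/dt φ(p(t)) = -k·‖∇φ(p(t))‖²·cos²(θ(t) - θ_d(t)), which is nonpositive for all t. -/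
/-- The potential is nonincreasing along closed-loop unicycle trajectories
driven by the linear-velocity control `v = k‖∇φ‖cos θ̃` (eq. (11)):
`d/dt φ(p(t)) = -k ‖∇φ(p(t))‖² cos²(θ(t) - θ_d(t)) ≤ 0`. -/
theorem potential_nonincreasing_along_trajectory
    (φ : EuclideanSpace ℝ (Fin 2) → ℝ) (hφ : Differentiable ℝ φ)
    (k : ℝ) (hk : 0 < k)
    (p : ℝ → EuclideanSpace ℝ (Fin 2)) (θ θd : ℝ → ℝ)
    (hgrad : ∀ t : ℝ, gradient φ (p t) =
      (-‖gradient φ (p t)‖) • (WithLp.equiv 2 (Fin 2 → ℝ)).symm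
        ![Real.cos (θd t), Real.sin (θd t)])
    (hp : ∀ t : ℝ, HasDerivAt p
      ((k * ‖gradient φ (p t)‖ * Real.cos (θ t - θd t)) •
        (WithLp.equiv 2 (Fin 2 → ℝ)).symm ![Real.cos (θ t), Real.sin (θ t)]) t) :
    ∀ t : ℝ,
      HasDerivAt (fun s => φ (p s))
        (-k * ‖gradient φ (p t)‖ ^ 2 * Real.cos (θ t - θd t) ^ 2) t ∧
      -k * ‖gradient φ (p t)‖ ^ 2 * Real.cos (θ t - θd t) ^ 2 ≤ 0 := by
  intro t
  constructor
  · have hgradAt : HasGradientAt φ (gradient φ (p t)) (p t) :=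
      (hφ (p t)).hasGradientAt
    have hcomp := hgradAt.hasFDerivAt.comp_hasDerivAt t (hp t)
    refine HasDerivAt.congr_deriv hcomp ?_
    rw [InnerProductSpace.toDual_apply_apply, real_inner_smul_right]
    have hiu :
        (inner ℝ (gradient φ (p t))
          ((WithLp.equiv 2 (Fin 2 → ℝ)).symm ![Real.cos (θ t), Real.sin (θ t)]) : ℝ)
        = -‖gradient φ (p t)‖ * Real.cos (θ t - θd t) := by
      rw [hgrad t, real_inner_smul_left]
      have : (inner ℝ ((WithLp.equiv 2 (Fin 2 → ℝ)).symm ![Real.cos (θd t), Real.sin (θd t)])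
          ((WithLp.equiv 2 (Fin 2 → ℝ)).symm ![Real.cos (θ t), Real.sin (θ t)]) : ℝ)
          = Real.cos (θ t - θd t) := by
        simp [PiLp.inner_apply, Fin.sum_univ_two, Real.cos_sub, RCLike.inner_apply, mul_comm]
      rw [this, ← hgrad t]
    rw [hiu]
    ring
  · have h1 : 0 ≤ k * ‖gradient φ (p t)‖ ^ 2 * Real.cos (θ t - θd t) ^ 2 := by positivity
    nlinarith
end

section
/- Let φ : ℝ² → ℝ be twice continuously differentiable, k > 0, and let p : ℝ → ℝ² and θ, θ_d : ℝ → ℝ be differentiable functions such that for every t: ∇φ(p(t)) ≠ 0, ∇φ(p(t)) = -‖∇φ(p(t))‖·(cos θ_d(t), sin θ_d(t)), and p'(t) = k·‖∇φ(p(t))‖·cos(θ(t) - θ_d(t))·(cos θ(t), sin θ(t)). Then θ_d'(t) = k·cos(θ(t) - θ_d(t)) · [sin θ_d(t), -cos θ_d(t)] · ∇²φ(p(t)) · [cos θ(t), sin θ(t)]ᵀ, where ∇²φ(p(t)) is the Hessian matrix of φ at p(t). -/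
open scoped RealInnerProductSpace

/-- Formula (12) of the paper for the feedforward term `θ̇_d`: along a closed-loop
unicycle trajectory with `∇φ(p(t)) = -‖∇φ(p(t))‖ (cos θ_d, sin θ_d)` and
`p' = k‖∇φ‖cos(θ - θ_d)(cos θ, sin θ)`, the desired-orientation rate is
`θ_d' = k cos(θ - θ_d) [sin θ_d, -cos θ_d] ∇²φ [cos θ, sin θ]ᵀ`, where the
Hessian `∇²φ` is the (Fréchet) derivative of the gradient of `φ`. -/
theorem desired_orientation_rate
    (φ : EuclideanSpace ℝ (Fin 2) → ℝ) (hφ : ContDiff ℝ 2 φ)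
    (k : ℝ) (hk : 0 < k)
    (p : ℝ → EuclideanSpace ℝ (Fin 2)) (θ θd : ℝ → ℝ)
    (hpd : Differentiable ℝ p) (hθd : Differentiable ℝ θ)
    (hθdd : Differentiable ℝ θd)
    (hne : ∀ t : ℝ, gradient φ (p t) ≠ 0)
    (hgrad : ∀ t : ℝ, gradient φ (p t) =
      (-‖gradient φ (p t)‖) • (WithLp.equiv 2 (Fin 2 → ℝ)).symm
        ![Real.cos (θd t), Real.sin (θd t)])
    (hp : ∀ t : ℝ, HasDerivAt p
      ((k * ‖gradient φ (p t)‖ * Real.cos (θ t - θd t)) •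
        (WithLp.equiv 2 (Fin 2 → ℝ)).symm ![Real.cos (θ t), Real.sin (θ t)]) t) :
    ∀ t : ℝ, deriv θd t =
      k * Real.cos (θ t - θd t) *
        ⟪(WithLp.equiv 2 (Fin 2 → ℝ)).symm ![Real.sin (θd t), -Real.cos (θd t)],
          fderiv ℝ (gradient φ) (p t)
            ((WithLp.equiv 2 (Fin 2 → ℝ)).symm
              ![Real.cos (θ t), Real.sin (θ t)])⟫ := by
  intro t
  have hgdiff : Differentiable ℝ (gradient φ) := by
    have h1 : ContDiff ℝ 1 (fderiv ℝ φ) := hφ.fderiv_right (by norm_num)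
    exact fun x => ((InnerProductSpace.toDual ℝ _).symm.differentiable.comp
      (h1.differentiable one_ne_zero)) x
  set U : ℝ → EuclideanSpace ℝ (Fin 2) := fun s => (WithLp.equiv 2 (Fin 2 → ℝ)).symm
      ![Real.cos (θd s), Real.sin (θd s)] with hU
  set V : ℝ → EuclideanSpace ℝ (Fin 2) := fun s => (WithLp.equiv 2 (Fin 2 → ℝ)).symm
      ![Real.sin (θd s), -Real.cos (θd s)] with hV
  set g : ℝ → EuclideanSpace ℝ (Fin 2) := fun s => gradient φ (p s) with hg
  set r : ℝ := ‖gradient φ (p t)‖ with hr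
  set W : EuclideanSpace ℝ (Fin 2) :=
    (WithLp.equiv 2 (Fin 2 → ℝ)).symm ![Real.cos (θ t), Real.sin (θ t)] with hW
  have hrpos : 0 < r := norm_pos_iff.mpr (hne t)
  have hθdt : HasDerivAt θd (deriv θd t) t := (hθdd t).hasDerivAt
  -- derivative of V
  have hVpi : HasDerivAt (fun s => ![Real.sin (θd s), -Real.cos (θd s)])
      (deriv θd t • ![Real.cos (θd t), Real.sin (θd t)]) t := by
    rw [hasDerivAt_pi]
    intro i
    fin_cases i
    · simpa [mul_comm, Function.comp_def] using (Real.hasDerivAt_sin (θd t)).comp t hθdt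
    · simpa [mul_comm, Function.comp_def, Pi.neg_def] using ((Real.hasDerivAt_cos (θd t)).comp t hθdt).neg
  have hVd : HasDerivAt V (deriv θd t • U t) t := by
    exact (((PiLp.continuousLinearEquiv 2 ℝ (fun _ : Fin 2 => ℝ)).symm :
        (Fin 2 → ℝ) →L[ℝ] EuclideanSpace ℝ (Fin 2)).hasFDerivAt).comp_hasDerivAt t hVpi
  -- derivative of g
  have hgd : HasDerivAt g (fderiv ℝ (gradient φ) (p t)
      ((k * r * Real.cos (θ t - θd t)) • W)) t :=
    ((hgdiff (p t)).hasFDerivAt).comp_hasDerivAt t (hp t)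
  -- ⟪V s, U s⟫ = 0 and ⟪U s, U s⟫ = 1
  have hVU : ∀ s : ℝ, ⟪V s, (WithLp.equiv 2 (Fin 2 → ℝ)).symm
      ![Real.cos (θd s), Real.sin (θd s)]⟫ = 0 := by
    intro s
    simp only [hV, PiLp.inner_apply, RCLike.inner_apply, conj_trivial,
      WithLp.equiv_symm_apply, WithLp.ofLp_toLp, PiLp.toLp_apply, Fin.sum_univ_two, Matrix.cons_val_zero, Matrix.cons_val_one,
      Matrix.head_cons]
    ring
  have hUU : ⟪U t, (WithLp.equiv 2 (Fin 2 → ℝ)).symm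
      ![Real.cos (θd t), Real.sin (θd t)]⟫ = 1 := by
    simp only [hU, PiLp.inner_apply, RCLike.inner_apply, conj_trivial,
      WithLp.equiv_symm_apply, WithLp.ofLp_toLp, PiLp.toLp_apply, Fin.sum_univ_two, Matrix.cons_val_zero, Matrix.cons_val_one,
      Matrix.head_cons]
    nlinarith [Real.cos_sq_add_sin_sq (θd t)]
  -- ⟪V s, g s⟫ vanishes identically
  have hzero : ∀ s : ℝ, ⟪V s, g s⟫ = 0 := by
    intro s
    show ⟪V s, gradient φ (p s)⟫ = 0
    rw [hgrad s, real_inner_smul_right, hVU s, mul_zero]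
  have hfd : HasDerivAt (fun s => ⟪V s, g s⟫)
      (⟪V t, fderiv ℝ (gradient φ) (p t) ((k * r * Real.cos (θ t - θd t)) • W)⟫
        + ⟪deriv θd t • U t, g t⟫) t := hVd.inner ℝ hgd
  have heq0 : ⟪V t, fderiv ℝ (gradient φ) (p t) ((k * r * Real.cos (θ t - θd t)) • W)⟫
      + ⟪deriv θd t • U t, g t⟫ = 0 := by
    have h0 : HasDerivAt (fun s => ⟪V s, g s⟫) 0 t := by
      have he : (fun s => ⟪V s, g s⟫) = fun _ => (0 : ℝ) := funext hzero
      rw [he]; exact hasDerivAt_const t 0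
    exact hfd.unique h0
  -- compute the two terms
  have hUg : ⟪U t, g t⟫ = -r := by
    show ⟪U t, gradient φ (p t)⟫ = -r
    rw [hgrad t, real_inner_smul_right, hUU, mul_one, ← hr]
  have h2 : ⟪deriv θd t • U t, g t⟫ = deriv θd t * (-r) := by
    rw [real_inner_smul_left, hUg]
  have h1 : ⟪V t, fderiv ℝ (gradient φ) (p t) ((k * r * Real.cos (θ t - θd t)) • W)⟫
      = (k * r * Real.cos (θ t - θd t)) * ⟪V t, fderiv ℝ (gradient φ) (p t) W⟫ := by
    rw [(fderiv ℝ (gradient φ) (p t)).map_smul, real_inner_smul_right]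
  rw [h1, h2] at heq0
  have hrne : r ≠ 0 := ne_of_gt hrpos
  exact mul_right_cancel₀ hrne (by linear_combination -heq0)
end
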